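/- The linear span of real and imaginary parts of the functions x ↦ e^{i⟨x,h⟩}, h ∈ H, is π-dense in C_b(H): for every uniformly continuous bounded φ : H → ℝ there exists a two-indexed sequence of trigonometric polynomials φ_{n_1,n_2} with lim_{n_1} lim_{n_2} φ_{n_1,n_2}(x) = φ(x) for all x and sup_{n_1,n_2} ‖φ_{n_1,n_2}‖_∞ ≤ ‖φ‖_∞. -/

import Mathlib

open Filter Topology
open scoped RealInnerProductSpace

/-- A real trigonometric polynomial on a Hilbert space: an element of the linear span
of real and imaginary parts of `x ↦ e^{i⟪x,h⟫}`, `h ∈ H`. -/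
def IsTrigPoly {H : Type*} [NormedAddCommGroup H] [InnerProductSpace ℝ H]
    (f : H → ℝ) : Prop :=
  ∃ (N : ℕ) (a b : Fin N → ℝ) (h : Fin N → H),
    f = fun x => ∑ i, (a i * Real.cos ⟪x, h i⟫ + b i * Real.sin ⟪x, h i⟫)

section TrigAlg
variable {H : Type*} [NormedAddCommGroup H] [InnerProductSpace ℝ H]

/-- generators -/
def trigGens (H : Type*) [NormedAddCommGroup H] [InnerProductSpace ℝ H] : Set (H → ℝ) :=
  (Set.range fun h : H => fun x => Real.cos ⟪x, h⟫) ∪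
  (Set.range fun h : H => fun x => Real.sin ⟪x, h⟫)

lemma isTrigPoly_cos (h : H) : IsTrigPoly (fun x => Real.cos ⟪x, h⟫) :=
  ⟨1, fun _ => 1, fun _ => 0, fun _ => h, by funext x; simp⟩

lemma isTrigPoly_sin (h : H) : IsTrigPoly (fun x => Real.sin ⟪x, h⟫) :=
  ⟨1, fun _ => 0, fun _ => 1, fun _ => h, by funext x; simp⟩

lemma IsTrigPoly.add {f g : H → ℝ} (hf : IsTrigPoly f) (hg : IsTrigPoly g) :
    IsTrigPoly (f + g) := by
  obtain ⟨N, a, b, h, rfl⟩ := hf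
  obtain ⟨M, a', b', h', rfl⟩ := hg
  refine ⟨N + M, Fin.append a a', Fin.append b b', Fin.append h h', ?_⟩
  funext x
  simp [Fin.sum_univ_add, Fin.append_left, Fin.append_right]

lemma IsTrigPoly.smul (r : ℝ) {f : H → ℝ} (hf : IsTrigPoly f) : IsTrigPoly (r • f) := by
  obtain ⟨N, a, b, h, rfl⟩ := hf
  refine ⟨N, fun i => r * a i, fun i => r * b i, h, ?_⟩
  funext x
  simp [Finset.mul_sum, mul_add, mul_assoc]

lemma isTrigPoly_of_mem_span {f : H → ℝ} (hf : f ∈ Submodule.span ℝ (trigGens H)) :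
    IsTrigPoly f := by
  induction hf using Submodule.span_induction with
  | mem g hg =>
    rcases hg with ⟨h, rfl⟩ | ⟨h, rfl⟩
    · exact isTrigPoly_cos h
    · exact isTrigPoly_sin h
  | zero => exact ⟨0, finZeroElim, finZeroElim, finZeroElim, by funext x; simp⟩
  | add g₁ g₂ _ _ h₁ h₂ => exact h₁.add h₂
  | smul r g _ hg => exact hg.smul r

lemma trigGens_mul_mem {f g : H → ℝ} (hf : f ∈ trigGens H) (hg : g ∈ trigGens H) :
    f * g ∈ Submodule.span ℝ (trigGens H) := by
  have memc : ∀ h : H, (fun x => Real.cos ⟪x, h⟫) ∈ Submodule.span ℝ (trigGens H) :=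
    fun h => Submodule.subset_span (Or.inl ⟨h, rfl⟩)
  have mems : ∀ h : H, (fun x => Real.sin ⟪x, h⟫) ∈ Submodule.span ℝ (trigGens H) :=
    fun h => Submodule.subset_span (Or.inr ⟨h, rfl⟩)
  rcases hf with ⟨h₁, rfl⟩ | ⟨h₁, rfl⟩ <;> rcases hg with ⟨h₂, rfl⟩ | ⟨h₂, rfl⟩
  · have : ((fun x => Real.cos ⟪x, h₁⟫) * fun x => Real.cos ⟪x, h₂⟫) =
        (1/2 : ℝ) • (fun x => Real.cos ⟪x, h₁ - h₂⟫) + (1/2 : ℝ) • fun x => Real.cos ⟪x, h₁ + h₂⟫ := by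
      funext x
      simp only [Pi.mul_apply, Pi.add_apply, Pi.smul_apply, smul_eq_mul,
        inner_sub_right, inner_add_right, Real.cos_sub, Real.cos_add]
      ring
    rw [this]
    exact Submodule.add_mem _ (Submodule.smul_mem _ _ (memc _)) (Submodule.smul_mem _ _ (memc _))
  · have : ((fun x => Real.cos ⟪x, h₁⟫) * fun x => Real.sin ⟪x, h₂⟫) =
        (1/2 : ℝ) • (fun x => Real.sin ⟪x, h₁ + h₂⟫) + (-(1/2) : ℝ) • fun x => Real.sin ⟪x, h₁ - h₂⟫ := by
      funext x
      simp only [Pi.mul_apply, Pi.add_apply, Pi.smul_apply, smul_eq_mul,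
        inner_sub_right, inner_add_right, Real.sin_sub, Real.sin_add]
      ring
    rw [this]
    exact Submodule.add_mem _ (Submodule.smul_mem _ _ (mems _)) (Submodule.smul_mem _ _ (mems _))
  · have : ((fun x => Real.sin ⟪x, h₁⟫) * fun x => Real.cos ⟪x, h₂⟫) =
        (1/2 : ℝ) • (fun x => Real.sin ⟪x, h₁ + h₂⟫) + (1/2 : ℝ) • fun x => Real.sin ⟪x, h₁ - h₂⟫ := by
      funext x
      simp only [Pi.mul_apply, Pi.add_apply, Pi.smul_apply, smul_eq_mul,
        inner_sub_right, inner_add_right, Real.sin_sub, Real.sin_add]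
      ring
    rw [this]
    exact Submodule.add_mem _ (Submodule.smul_mem _ _ (mems _)) (Submodule.smul_mem _ _ (mems _))
  · have : ((fun x => Real.sin ⟪x, h₁⟫) * fun x => Real.sin ⟪x, h₂⟫) =
        (1/2 : ℝ) • (fun x => Real.cos ⟪x, h₁ - h₂⟫) + (-(1/2) : ℝ) • fun x => Real.cos ⟪x, h₁ + h₂⟫ := by
      funext x
      simp only [Pi.mul_apply, Pi.add_apply, Pi.smul_apply, smul_eq_mul,
        inner_sub_right, inner_add_right, Real.cos_sub, Real.cos_add]
      ring
    rw [this]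
    exact Submodule.add_mem _ (Submodule.smul_mem _ _ (memc _)) (Submodule.smul_mem _ _ (memc _))

lemma span_trigGens_mul_mem {f g : H → ℝ}
    (hf : f ∈ Submodule.span ℝ (trigGens H)) (hg : g ∈ Submodule.span ℝ (trigGens H)) :
    f * g ∈ Submodule.span ℝ (trigGens H) := by
  have h1 : f * g ∈ Submodule.span ℝ (trigGens H) * Submodule.span ℝ (trigGens H) :=
    Submodule.mul_mem_mul hf hg
  rw [Submodule.span_mul_span] at h1
  refine Submodule.span_le.mpr ?_ h1
  rintro u ⟨v, hv, w, hw, rfl⟩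
  exact trigGens_mul_mem hv hw

lemma span_trigGens_const (r : ℝ) :
    (fun _ : H => r) ∈ Submodule.span ℝ (trigGens H) := by
  have : (fun _ : H => r) = r • fun x : H => Real.cos ⟪x, (0:H)⟫ := by
    funext x; simp
  rw [this]
  exact Submodule.smul_mem _ _ (Submodule.subset_span (Or.inl ⟨0, rfl⟩))

end TrigAlg

open Filter Topology

noncomputable section Mfl

/-- representative of `t` mod `L` in `[-L/2, L/2)` -/
def mfl (L t : ℝ) : ℝ := t - L * ⌊t / L + 1/2⌋

lemma mfl_mem {L : ℝ} (hL : 0 < L) (t : ℝ) : mfl L t ∈ Set.Ico (-(L/2)) (L/2) := by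
  have h1 : (⌊t / L + 1/2⌋ : ℝ) ≤ t / L + 1/2 := Int.floor_le _
  have h2 : t / L + 1/2 < ⌊t / L + 1/2⌋ + 1 := Int.lt_floor_add_one _
  have ht : L * (t / L) = t := by field_simp
  constructor
  · simp only [mfl]; nlinarith
  · simp only [mfl]; nlinarith

lemma abs_mfl_le_half {L : ℝ} (hL : 0 < L) (t : ℝ) : |mfl L t| ≤ L / 2 := by
  have h := mfl_mem hL t
  rw [abs_le]
  exact ⟨h.1, h.2.le⟩

lemma mfl_eq_self {L : ℝ} (hL : 0 < L) {t : ℝ} (ht : |t| < L / 2) : mfl L t = t := by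
  rw [abs_lt] at ht
  have h0 : ⌊t / L + 1/2⌋ = 0 := by
    have hneg : -(1/2 : ℝ) < t / L := by rw [neg_lt, ← neg_div, div_lt_iff₀ hL]; linarith
    have hpos : t / L < 1/2 := by rw [div_lt_iff₀ hL]; linarith
    rw [Int.floor_eq_zero_iff]
    exact Set.mem_Ico.mpr ⟨by linarith, by linarith⟩
  rw [mfl, h0]; simp

lemma mfl_coe {L : ℝ} (t : ℝ) : ((mfl L t : ℝ) : AddCircle L) = (t : AddCircle L) := by
  have h : ((L * ⌊t / L + 1/2⌋ : ℝ) : AddCircle L) = 0 := by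
    rw [AddCircle.coe_eq_zero_iff]
    exact ⟨⌊t / L + 1/2⌋, by rw [zsmul_eq_mul]; ring⟩
  calc ((mfl L t : ℝ) : AddCircle L)
      = ((t : ℝ) : AddCircle L) - ((L * ⌊t / L + 1/2⌋ : ℝ) : AddCircle L) := by
        rw [← AddCircle.coe_sub]; rfl
    _ = (t : AddCircle L) := by rw [h, sub_zero]

lemma mfl_eq_of_coe_eq {L : ℝ} (hL : 0 < L) {s t : ℝ}
    (h : (s : AddCircle L) = (t : AddCircle L)) : mfl L s = mfl L t := by
  have h0 : ((s - t : ℝ) : AddCircle L) = 0 := by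
    rw [AddCircle.coe_sub, h, sub_self]
  obtain ⟨n, hn⟩ := (AddCircle.coe_eq_zero_iff L).mp h0
  rw [zsmul_eq_mul] at hn
  have hs : s = t + L * n := by linarith [hn.symm.le, hn.le]
  have hdiv : s / L + 1/2 = (t / L + 1/2) + n := by
    rw [hs]; field_simp; ring
  simp only [mfl, hdiv, Int.floor_add_intCast]
  push_cast
  rw [hs]
  ring

lemma abs_mfl_le {L : ℝ} (hL : 0 < L) (t : ℝ) (k : ℤ) : |mfl L t| ≤ |t - L * k| := by
  set j := ⌊t / L + 1/2⌋ with hj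
  have hm : t - L * k = mfl L t + L * ((j : ℝ) - k) := by simp only [mfl, ← hj]; ring
  rcases eq_or_ne j k with rfl | hne
  · simp [hm]
  · have h1 : (1 : ℝ) ≤ |(j : ℝ) - k| := by
      have h1' : (1:ℤ) ≤ |j - k| := Int.one_le_abs (sub_ne_zero.mpr hne)
      calc (1:ℝ) = ((1:ℤ):ℝ) := by norm_num
        _ ≤ ((|j - k| : ℤ) : ℝ) := by exact_mod_cast h1'
        _ = |(j:ℝ) - k| := by rw [Int.cast_abs]; push_cast; ring_nf
    have h2 : |mfl L t| ≤ L / 2 := abs_mfl_le_half hL t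
    have h3 : |L * ((j:ℝ) - k)| ≤ |mfl L t + L * ((j:ℝ) - k)| + |mfl L t| := by
      calc |L * ((j:ℝ) - k)| = |(mfl L t + L * ((j:ℝ) - k)) - mfl L t| := by ring_nf
        _ ≤ _ := abs_sub _ _
    have h4 : L ≤ |L * ((j:ℝ) - k)| := by
      rw [abs_mul, abs_of_pos hL]
      nlinarith
    rw [hm]
    linarith

/-- `|mfl L t|` is the distance from `t` to the lattice `Lℤ`. -/
lemma abs_mfl_eq_infDist {L : ℝ} (hL : 0 < L) (t : ℝ) :
    |mfl L t| = Metric.infDist t (Set.range fun k : ℤ => L * k) := by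
  apply le_antisymm
  · by_contra hlt
    push_neg at hlt
    obtain ⟨y, ⟨k, rfl⟩, hy⟩ :=
      (Metric.infDist_lt_iff (s := Set.range fun k : ℤ => L * (k:ℝ)) ⟨L * ((0:ℤ):ℝ), ⟨0, rfl⟩⟩).mp hlt
    rw [Real.dist_eq] at hy
    exact absurd (abs_mfl_le hL t k) (by linarith)
  · have hmem : L * ((⌊t / L + 1/2⌋ : ℤ) : ℝ) ∈ Set.range fun k : ℤ => L * (k:ℝ) :=
      ⟨⌊t / L + 1/2⌋, rfl⟩
    calc Metric.infDist t (Set.range fun k : ℤ => L * (k:ℝ))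
        ≤ dist t (L * ((⌊t / L + 1/2⌋ : ℤ) : ℝ)) := Metric.infDist_le_dist_of_mem hmem
      _ = |mfl L t| := by rw [Real.dist_eq]; rfl

lemma continuous_abs_mfl {L : ℝ} (hL : 0 < L) : Continuous fun t => |mfl L t| := by
  have h : (fun t => |mfl L t|) = fun t => Metric.infDist t (Set.range fun k : ℤ => L * k) := by
    funext t; exact abs_mfl_eq_infDist hL t
  rw [h]
  exact Metric.continuous_infDist_pt _

/-- continuity of `mfl` at points where `mfl L t ≠ -(L/2)` -/
lemma continuousAt_mfl {L : ℝ} (hL : 0 < L) {t : ℝ} (ht : mfl L t ≠ -(L/2)) :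
    ContinuousAt (mfl L) t := by
  set j := ⌊t / L + 1/2⌋ with hj
  have h1 : (j : ℝ) < t / L + 1/2 := by
    rcases lt_or_eq_of_le (Int.floor_le (t / L + 1/2)) with h | h
    · exact h
    · exfalso; apply ht
      simp only [mfl, ← hj]
      have h' : (j : ℝ) = t / L + 1/2 := by rw [hj]; exact h
      have : L * (t / L) = t := by field_simp
      rw [h']
      nlinarith
  have h2 : t / L + 1/2 < j + 1 := Int.lt_floor_add_one _
  have hev : ∀ᶠ s in 𝓝 t, mfl L s = s - L * j := by
    have hopen : IsOpen {s : ℝ | (j:ℝ) < s / L + 1/2 ∧ s / L + 1/2 < j + 1} :=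
      IsOpen.and (isOpen_lt continuous_const (by fun_prop))
        (isOpen_lt (by fun_prop) continuous_const)
    filter_upwards [hopen.mem_nhds ⟨h1, h2⟩] with s hs
    have hfl : ⌊s / L + 1/2⌋ = j := Int.floor_eq_iff.mpr ⟨hs.1.le, hs.2⟩
    simp only [mfl]
    rw [hfl]
  have hc : ContinuousAt (fun s : ℝ => s - L * (j:ℝ)) t := by fun_prop
  have hev' : mfl L =ᶠ[𝓝 t] fun s : ℝ => s - L * (j:ℝ) := hev
  exact hc.congr hev'.symm

section Key
variable {H : Type*} [NormedAddCommGroup H] [InnerProductSpace ℝ H] [CompleteSpace H]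

set_option maxHeartbeats 1000000 in
open Metric in
lemma key_approx (φ : H → ℝ) (hφc : Continuous φ) {C : ℝ} (hC : 0 < C) (hφb : ∀ x, |φ x| ≤ C)
    (V : Submodule ℝ H) [FiniteDimensional ℝ V] {δ R : ℝ} (hδ : 0 < δ) (hR : 0 < R) :
    ∃ f : H → ℝ, IsTrigPoly f ∧ (∀ x, |f x| ≤ C) ∧
      ∀ x : H, ‖(Submodule.orthogonalProjection V x : H)‖ ≤ R →
        |f x - φ (Submodule.orthogonalProjection V x : H)| ≤ δ := by
  classical
  set d := Module.finrank ℝ V with hd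
  set b : OrthonormalBasis (Fin d) ℝ V := stdOrthonormalBasis ℝ V with hb
  set bH : Fin d → H := fun i => ((b i : V) : H) with hbH
  have hbH_norm : ∀ i, ‖bH i‖ = 1 := by
    intro i
    have := b.orthonormal.1 i
    exact this
  have hbH_mem : ∀ i, bH i ∈ V := fun i => (b i).2
  set L : ℝ := 2 * R + 4 with hLdef
  have hL : 0 < L := by positivity
  haveI : Fact (0 < L) := ⟨hL⟩
  set θ : ℝ := min (δ / (2 * C)) (1/2) with hθdef
  have hθ0 : 0 < θ := lt_min (by positivity) (by norm_num)
  have hθδ : θ ≤ δ / (2 * C) := min_le_left _ _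
  have hθhalf : θ ≤ 1/2 := min_le_right _ _
  -- the finite-dimensional function
  set G : (Fin d → ℝ) → ℝ := fun u => (1 - θ) * φ (∑ i, u i • bH i) with hG
  have hGc : Continuous G := by
    apply Continuous.mul continuous_const
    exact hφc.comp (by fun_prop)
  have hGb : ∀ u, |G u| ≤ (1 - θ) * C := by
    intro u
    rw [hG, abs_mul, abs_of_nonneg (by linarith : (0:ℝ) ≤ 1 - θ)]
    exact mul_le_mul_of_nonneg_left (hφb _) (by linarith)
  -- one-dimensional periodic cutoff
  set w : ℝ → ℝ := fun t => max 0 (min 1 (R + 1 - |mfl L t|)) with hw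
  have hwc : Continuous w := by
    apply Continuous.max continuous_const
    apply Continuous.min continuous_const
    exact Continuous.sub continuous_const (continuous_abs_mfl hL)
  have hw01 : ∀ t, 0 ≤ w t ∧ w t ≤ 1 := fun t =>
    ⟨le_max_left _ _, max_le zero_le_one (min_le_left _ _)⟩
  have hw_one : ∀ t : ℝ, |t| ≤ R → w t = 1 := by
    intro t ht
    have h1 : |mfl L t| = |t| := by
      rw [mfl_eq_self hL (lt_of_le_of_lt ht (by rw [hLdef]; linarith))]
    rw [hw]
    simp only [h1]
    rw [min_eq_left (by linarith), max_eq_right (by linarith)]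
  have hw_zero : ∀ t : ℝ, R + 1 ≤ |mfl L t| → w t = 0 := by
    intro t ht
    simp only [hw]
    rw [max_eq_left (min_le_of_right_le (by linarith))]
  -- the periodized function on ℝ^d
  set hh : (Fin d → ℝ) → ℝ := fun u => (∏ i, w (u i)) * G (fun i => mfl L (u i)) with hhh
  have hprod01 : ∀ u : Fin d → ℝ, 0 ≤ ∏ i, w (u i) ∧ (∏ i, w (u i)) ≤ 1 := fun u =>
    ⟨Finset.prod_nonneg fun i _ => (hw01 _).1,
     Finset.prod_le_one (fun i _ => (hw01 _).1) (fun i _ => (hw01 _).2)⟩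
  have hhb : ∀ u, |hh u| ≤ (1 - θ) * C := by
    intro u
    rw [hhh, abs_mul, abs_of_nonneg (hprod01 u).1]
    calc (∏ i, w (u i)) * |G fun i => mfl L (u i)| ≤ 1 * ((1 - θ) * C) := by
          apply mul_le_mul (hprod01 u).2 (hGb _) (abs_nonneg _) zero_le_one
      _ = (1 - θ) * C := one_mul _
  have hhc : Continuous hh := by
    rw [continuous_iff_continuousAt]
    intro u
    by_cases hgood : ∀ i, mfl L (u i) ≠ -(L/2)
    · have h1 : ContinuousAt (fun v : Fin d → ℝ => ∏ i, w (v i)) u :=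
        (continuous_finset_prod Finset.univ fun i _ =>
          hwc.comp (continuous_apply i)).continuousAt
      have h2 : ContinuousAt (fun v : Fin d → ℝ => G fun i => mfl L (v i)) u := by
        apply hGc.continuousAt.comp
        apply continuousAt_pi.mpr
        intro i
        exact ContinuousAt.comp (x := u) (g := mfl L) (f := fun v : Fin d → ℝ => v i)
          (continuousAt_mfl hL (hgood i)) ((continuous_apply i).continuousAt)
      exact h1.mul h2
    · push_neg at hgood
      obtain ⟨i, hi⟩ := hgood
      have hzero : ∀ v : Fin d → ℝ, |v i - u i| < 1 → hh v = 0 := by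
        intro v hv
        have e2 := abs_mfl_eq_infDist hL (u i)
        have e3 := abs_mfl_eq_infDist hL (v i)
        have e1 : |mfl L (u i)| = L/2 := by rw [hi, abs_neg, abs_of_pos (by linarith)]
        have htri := Metric.infDist_le_infDist_add_dist (x := u i) (y := v i)
          (s := Set.range fun k : ℤ => L * (k:ℝ))
        rw [← e2, ← e3, Real.dist_eq, e1] at htri
        have hinf : R + 1 ≤ |mfl L (v i)| := by
          have habs : |u i - v i| < 1 := by rw [abs_sub_comm]; exact hv
          rw [hLdef] at htri ⊢
          linarith [abs_sub_comm (u i) (v i) ▸ htri]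
        have hwv : w (v i) = 0 := hw_zero _ hinf
        simp only [hhh]
        rw [Finset.prod_eq_zero (Finset.mem_univ i) hwv, zero_mul]
      have hu0 : hh u = 0 := hzero u (by simpa using one_pos)
      have hev : (fun _ : Fin d → ℝ => (0:ℝ)) =ᶠ[𝓝 u] hh := by
        filter_upwards [Metric.ball_mem_nhds u one_pos] with v hv
        refine (hzero v ?_).symm
        have := dist_le_pi_dist v u i
        rw [Metric.mem_ball] at hv
        rw [Real.dist_eq] at this
        linarith [this.trans_lt hv]
      rw [show u = u from rfl] at hu0
      have : ContinuousAt hh u := continuousAt_const.congr hev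
      exact this
  -- descend to the torus
  set q : (Fin d → ℝ) → (Fin d → AddCircle L) := fun u i => (u i : AddCircle L) with hqdef
  have hq : IsOpenQuotientMap q :=
    IsOpenQuotientMap.piMap (fun i => QuotientAddGroup.isOpenQuotientMap_mk)
  have hfib : ∀ u v : Fin d → ℝ, q u = q v → hh u = hh v := by
    intro u v huv
    have hm : ∀ i, mfl L (u i) = mfl L (v i) := fun i => mfl_eq_of_coe_eq hL (congrFun huv i)
    simp only [hhh]
    rw [show (fun i => mfl L (u i)) = fun i => mfl L (v i) from funext hm]
    congr 1
    exact Finset.prod_congr rfl fun i _ => by simp only [hw, hm i]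
  set F : (Fin d → AddCircle L) → ℝ := hh ∘ Function.surjInv hq.surjective with hF
  have hFq : ∀ u, F (q u) = hh u := fun u =>
    hfib _ _ (Function.surjInv_eq hq.surjective (q u))
  have hFc : Continuous F := by
    rw [← hq.continuous_comp_iff]
    have : F ∘ q = hh := funext hFq
    rw [this]
    exact hhc
  -- Stone-Weierstrass on the torus
  set reMap : Fin d → C(Fin d → AddCircle L, ℝ) := fun i =>
    ⟨fun t => (AddCircle.toCircle (t i) : ℂ).re,
      Complex.continuous_re.comp ((continuous_induced_dom.comp
        AddCircle.continuous_toCircle).comp (continuous_apply i))⟩ with hreMap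
  set imMap : Fin d → C(Fin d → AddCircle L, ℝ) := fun i =>
    ⟨fun t => (AddCircle.toCircle (t i) : ℂ).im,
      Complex.continuous_im.comp ((continuous_induced_dom.comp
        AddCircle.continuous_toCircle).comp (continuous_apply i))⟩ with himMap
  set genSet : Set C(Fin d → AddCircle L, ℝ) := Set.range reMap ∪ Set.range imMap with hgen
  have hsep : (Algebra.adjoin ℝ genSet).SeparatesPoints := by
    intro x y hxy
    have hex : ∃ i, x i ≠ y i := by
      by_contra hcon
      push_neg at hcon
      exact hxy (funext hcon)
    obtain ⟨i, hi⟩ := hex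
    have htc : (AddCircle.toCircle (x i) : ℂ) ≠ (AddCircle.toCircle (y i) : ℂ) := by
      intro hcontr
      exact hi (AddCircle.injective_toCircle hL.ne' (Subtype.ext hcontr))
    by_cases hre : (AddCircle.toCircle (x i) : ℂ).re = (AddCircle.toCircle (y i) : ℂ).re
    · have him : (AddCircle.toCircle (x i) : ℂ).im ≠ (AddCircle.toCircle (y i) : ℂ).im := by
        intro hcontr
        exact htc (Complex.ext hre hcontr)
      exact ⟨imMap i, ⟨imMap i, Algebra.subset_adjoin (Or.inr ⟨i, rfl⟩), rfl⟩, him⟩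
    · exact ⟨reMap i, ⟨reMap i, Algebra.subset_adjoin (Or.inl ⟨i, rfl⟩), rfl⟩, hre⟩
  have hε : 0 < θ * C / 2 := by positivity
  obtain ⟨a, ha⟩ := ContinuousMap.exists_mem_subalgebra_near_continuous_of_separatesPoints
    (Algebra.adjoin ℝ genSet) hsep F hFc (θ * C / 2) hε
  -- the pullback to H
  set cx : H → (Fin d → ℝ) := fun x i => ⟪x, bH i⟫ with hcx
  have hpull : ∀ p : C(Fin d → AddCircle L, ℝ), p ∈ Algebra.adjoin ℝ genSet →
      (fun x : H => p (q (cx x))) ∈ Submodule.span ℝ (trigGens H) := by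
    intro p hp
    induction hp using Algebra.adjoin_induction with
    | mem g hg =>
      rcases hg with ⟨i, rfl⟩ | ⟨i, rfl⟩
      · have heq : (fun x => (reMap i) (q (cx x))) =
            fun x : H => Real.cos ⟪x, ((2 * Real.pi / L) • bH i : H)⟫ := by
          funext x
          simp only [hreMap, ContinuousMap.coe_mk, hqdef, hcx]
          rw [AddCircle.toCircle_apply_mk, Circle.coe_exp, Complex.exp_ofReal_mul_I_re]
          rw [real_inner_smul_right]
        rw [heq]
        exact Submodule.subset_span (Or.inl ⟨(2 * Real.pi / L) • bH i, rfl⟩)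
      · have heq : (fun x => (imMap i) (q (cx x))) =
            fun x : H => Real.sin ⟪x, ((2 * Real.pi / L) • bH i : H)⟫ := by
          funext x
          simp only [himMap, ContinuousMap.coe_mk, hqdef, hcx]
          rw [AddCircle.toCircle_apply_mk, Circle.coe_exp, Complex.exp_ofReal_mul_I_im]
          rw [real_inner_smul_right]
        rw [heq]
        exact Submodule.subset_span (Or.inr ⟨(2 * Real.pi / L) • bH i, rfl⟩)
    | algebraMap r =>
      have heq : (fun x : H => (algebraMap ℝ C(Fin d → AddCircle L, ℝ) r) (q (cx x))) =
          fun _ : H => r := by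
        funext x
        simp
      rw [heq]
      exact span_trigGens_const r
    | add p₁ p₂ h₁ h₂ ih₁ ih₂ =>
      have heq : (fun x : H => (p₁ + p₂) (q (cx x))) =
          (fun x : H => p₁ (q (cx x))) + fun x : H => p₂ (q (cx x)) := by
        funext x; simp
      rw [heq]
      exact Submodule.add_mem _ ih₁ ih₂
    | mul p₁ p₂ h₁ h₂ ih₁ ih₂ =>
      have heq : (fun x : H => (p₁ * p₂) (q (cx x))) =
          (fun x : H => p₁ (q (cx x))) * fun x : H => p₂ (q (cx x)) := by
        funext x; simp
      rw [heq]
      exact span_trigGens_mul_mem ih₁ ih₂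
  refine ⟨fun x => (a : C(Fin d → AddCircle L, ℝ)) (q (cx x)), ?_, ?_, ?_⟩
  · exact isTrigPoly_of_mem_span (hpull _ a.2)
  · -- global bound
    intro x
    have h1 : ‖(a : C(Fin d → AddCircle L, ℝ)) (q (cx x)) - F (q (cx x))‖ < θ * C / 2 :=
      ha (q (cx x))
    rw [Real.norm_eq_abs] at h1
    have h2 : |F (q (cx x))| ≤ (1 - θ) * C := by rw [hFq]; exact hhb _
    have h3 := abs_sub_abs_le_abs_sub ((a : C(Fin d → AddCircle L, ℝ)) (q (cx x))) (F (q (cx x)))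
    nlinarith
  · -- approximation on the ball
    intro x hx
    set v : H := (Submodule.orthogonalProjection V x : H) with hv
    have hcxv : ∀ i, cx x i = ⟪v, bH i⟫ := by
      intro i
      rw [hcx]
      simp only
      have horth : ⟪x - v, bH i⟫ = 0 := by
        have hmem := Submodule.sub_starProjection_mem_orthogonal (K := V) x
        rw [Submodule.mem_orthogonal] at hmem
        rw [real_inner_comm]
        exact hmem (bH i) (hbH_mem i)
      have hsub := inner_sub_left (𝕜 := ℝ) x v (bH i)
      rw [horth] at hsub
      have : ⟪x, bH i⟫ - ⟪v, bH i⟫ = 0 := by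
        rw [← hsub]
      linarith
    have hcxb : ∀ i, |cx x i| ≤ R := by
      intro i
      rw [hcxv i]
      calc |⟪v, bH i⟫| ≤ ‖v‖ * ‖bH i‖ := abs_real_inner_le_norm _ _
        _ = ‖v‖ := by rw [hbH_norm i, mul_one]
        _ ≤ R := hx
    have hmfl_eq : ∀ i, mfl L (cx x i) = cx x i := fun i =>
      mfl_eq_self hL (lt_of_le_of_lt (hcxb i) (by rw [hLdef]; linarith))
    have hprod1 : (∏ i, w (cx x i)) = 1 :=
      Finset.prod_eq_one fun i _ => hw_one _ (hcxb i)
    have hhcx : hh (cx x) = G (cx x) := by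
      simp only [hhh]
      rw [hprod1, one_mul]
      congr 1
      funext i
      exact hmfl_eq i
    have hsum : (∑ i, cx x i • bH i) = v := by
      have hrepr := b.sum_repr' (Submodule.orthogonalProjection V x)
      have hcast : ((∑ i, (⟪b i, Submodule.orthogonalProjection V x⟫ : ℝ) • b i : V) : H) = v := by
        rw [hrepr]
      rw [← hcast]
      push_cast
      apply Finset.sum_congr rfl
      intro i _
      rw [hcxv i]
      congr 1
      rw [real_inner_comm, Submodule.coe_inner]
    have hGcx : G (cx x) = (1 - θ) * φ v := by rw [hG]; simp only; rw [hsum]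
    have h1 : ‖(a : C(Fin d → AddCircle L, ℝ)) (q (cx x)) - F (q (cx x))‖ < θ * C / 2 :=
      ha (q (cx x))
    rw [Real.norm_eq_abs] at h1
    have h2 : F (q (cx x)) = (1 - θ) * φ v := by rw [hFq, hhcx, hGcx]
    have h3 : |φ v| ≤ C := hφb v
    have hθδ2 : θ * (2 * C) ≤ δ := by
      rw [← le_div_iff₀ (by positivity : (0:ℝ) < 2 * C)]
      exact hθδ
    calc |(a : C(Fin d → AddCircle L, ℝ)) (q (cx x)) - φ v|
        = |((a : C(Fin d → AddCircle L, ℝ)) (q (cx x)) - F (q (cx x)))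
          + ((1 - θ) * φ v - φ v)| := by rw [h2]; ring_nf
      _ ≤ |(a : C(Fin d → AddCircle L, ℝ)) (q (cx x)) - F (q (cx x))| + |(1 - θ) * φ v - φ v| :=
          abs_add_le _ _
      _ ≤ θ * C / 2 + θ * |φ v| := by
          have habs : |(1 - θ) * φ v - φ v| = θ * |φ v| := by
            rw [show (1 - θ) * φ v - φ v = -(θ * φ v) by ring, abs_neg, abs_mul,
              abs_of_pos hθ0]
          rw [habs]
          linarith
      _ ≤ θ * C / 2 + θ * C := by nlinarith
      _ ≤ δ := by nlinarith
end Key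


set_option maxHeartbeats 1000000 in
/-- trigonometric polynomials are π-dense in `C_b(H)`: every bounded
uniformly continuous `φ : H → ℝ` is a two-indexed iterated bounded pointwise limit of
trigonometric polynomials, with sup norms bounded by any bound `C` for `φ`
(in particular by `‖φ‖_∞`). -/
theorem trig_polynomials_pi_dense
    {H : Type*} [NormedAddCommGroup H] [InnerProductSpace ℝ H] [CompleteSpace H]
    [TopologicalSpace.SeparableSpace H]
    (φ : H → ℝ) (hφ : UniformContinuous φ) (C : ℝ) (hC : ∀ x, |φ x| ≤ C) :
    ∃ φseq : ℕ → ℕ → H → ℝ, ∃ ψ : ℕ → H → ℝ,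
      (∀ n₁ n₂, IsTrigPoly (φseq n₁ n₂)) ∧
      (∀ n₁ x, Tendsto (fun n₂ => φseq n₁ n₂ x) atTop (𝓝 (ψ n₁ x))) ∧
      (∀ x, Tendsto (fun n₁ => ψ n₁ x) atTop (𝓝 (φ x))) ∧
      (∀ n₁ n₂ x, |φseq n₁ n₂ x| ≤ C) := by
  classical
  have hC0 : 0 ≤ C := le_trans (abs_nonneg _) (hC 0)
  rcases eq_or_lt_of_le hC0 with hC0' | hCpos
  · -- C = 0 : φ is identically zero
    have hφ0 : ∀ x, φ x = 0 := fun x =>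
      abs_eq_zero.mp (le_antisymm (hC0' ▸ hC x) (abs_nonneg _))
    refine ⟨fun _ _ _ => 0, fun _ _ => 0, ?_, ?_, ?_, ?_⟩
    · intro n₁ n₂
      exact ⟨0, finZeroElim, finZeroElim, finZeroElim, by funext x; simp⟩
    · intro n₁ x
      exact tendsto_const_nhds
    · intro x
      rw [hφ0 x]
      exact tendsto_const_nhds
    · intro n₁ n₂ x
      rw [← hC0']
      simp
  · haveI : Nonempty H := ⟨0⟩
    set z := TopologicalSpace.denseSeq H with hz'
    have hz : DenseRange z := TopologicalSpace.denseRange_denseSeq H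
    set V : ℕ → Submodule ℝ H := fun n => Submodule.span ℝ (z '' Set.Iio n) with hV
    haveI hVfd : ∀ n, FiniteDimensional ℝ (V n) := fun n =>
      FiniteDimensional.span_of_finite ℝ ((Set.finite_Iio n).image z)
    have hproj : ∀ x : H,
        Tendsto (fun n => ((Submodule.orthogonalProjection (V n) x : H))) atTop (𝓝 x) := by
      intro x
      rw [Metric.tendsto_atTop]
      intro ε hε
      obtain ⟨k, hk⟩ := Metric.denseRange_iff.mp hz x ε hε
      refine ⟨k + 1, fun n hn => ?_⟩
      have hzk : z k ∈ V n :=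
        Submodule.subset_span ⟨k, lt_of_lt_of_le (Nat.lt_succ_self k) hn, rfl⟩
      have hmin : ‖x - (Submodule.orthogonalProjection (V n) x : H)‖ = _ :=
        Submodule.starProjection_minimal (U := V n) x
      have hle : ‖x - (Submodule.orthogonalProjection (V n) x : H)‖ ≤ ‖x - z k‖ := by
        rw [hmin]
        exact ciInf_le ⟨0, by rintro r ⟨v, rfl⟩; exact norm_nonneg _⟩ (⟨z k, hzk⟩ : V n)
      rw [dist_comm, dist_eq_norm]
      calc ‖x - (Submodule.orthogonalProjection (V n) x : H)‖ ≤ ‖x - z k‖ := hle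
        _ = dist x (z k) := (dist_eq_norm x (z k)).symm
        _ < ε := hk
    set ψ : ℕ → H → ℝ := fun n x => φ (Submodule.orthogonalProjection (V n) x : H) with hψ
    have hkey : ∀ n₁ n₂ : ℕ, ∃ f : H → ℝ, IsTrigPoly f ∧ (∀ x, |f x| ≤ C) ∧
        ∀ x : H, ‖(Submodule.orthogonalProjection (V n₁) x : H)‖ ≤ ((n₂ : ℝ) + 1) →
          |f x - φ (Submodule.orthogonalProjection (V n₁) x : H)| ≤ 1 / ((n₂ : ℝ) + 1) := by
      intro n₁ n₂
      exact key_approx φ hφ.continuous hCpos hC (V n₁) (by positivity) (by positivity)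
    choose φs hTP hBd hAp using hkey
    refine ⟨φs, ψ, hTP, ?_, ?_, fun n₁ n₂ x => hBd n₁ n₂ x⟩
    · intro n₁ x
      rw [Metric.tendsto_atTop]
      intro ε hε
      obtain ⟨N₀, hN₀⟩ := exists_nat_ge ‖(Submodule.orthogonalProjection (V n₁) x : H)‖
      obtain ⟨N₁, hN₁⟩ := exists_nat_gt (1 / ε)
      refine ⟨max N₀ N₁, fun n hn => ?_⟩
      have hn₀ : (N₀ : ℝ) ≤ n := by exact_mod_cast le_trans (le_max_left _ _) hn
      have hn₁ : (N₁ : ℝ) ≤ n := by exact_mod_cast le_trans (le_max_right _ _) hn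
      have hcond : ‖(Submodule.orthogonalProjection (V n₁) x : H)‖ ≤ ((n : ℝ) + 1) := by linarith
      have happ := hAp n₁ n x hcond
      rw [Real.dist_eq]
      have hrecip : 1 / ((n : ℝ) + 1) < ε := by
        have h1 : 1 / ε < (n : ℝ) + 1 := by linarith
        rw [div_lt_iff₀ (by positivity : (0:ℝ) < (n:ℝ) + 1)]
        rw [div_lt_iff₀ hε] at h1
        nlinarith
      calc |φs n₁ n x - ψ n₁ x| ≤ 1 / ((n : ℝ) + 1) := happ
        _ < ε := hrecip
    · intro x
      exact (hφ.continuous.tendsto x).comp (hproj x)
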